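/- If E is a weakly absorbing Borel equivalence relation on a standard Borel space, then the ℤ-jump E^{[ℤ]} is Borel reducible to the Friedman–Stanley jump E^+. -/

import Mathlib

/-- The Γ-jump of an equivalence relation `E` on `X`. -/
def GammaJump (Γ : Type*) [Group Γ] {X : Type*} (E : X → X → Prop) :
    (Γ → X) → (Γ → X) → Prop :=
  fun x y => ∃ γ : Γ, ∀ α : Γ, E (x (γ⁻¹ * α)) (y α)

/-- Borel reducibility of binary relations on measurable spaces. -/
def BorelReducible {X Y : Type*} [MeasurableSpace X] [MeasurableSpace Y]
    (E : X → X → Prop) (F : Y → Y → Prop) : Prop :=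
  ∃ f : X → Y, Measurable f ∧ ∀ x x', E x x' ↔ F (f x) (f x')

/-- The Friedman–Stanley jump `E⁺` on `X^ω`. -/
def FSJump {X : Type*} (E : X → X → Prop) : (ℕ → X) → (ℕ → X) → Prop :=
  fun x y => Set.range (fun n => {z | E (x n) z}) = Set.range (fun n => {z | E (y n) z})

/-- `E^{<ω}`: coordinatewise equivalence of finite sequences of the same length. -/
def FinSeqRel {X : Type*} (E : X → X → Prop) :
    (Σ n : ℕ, Fin n → X) → (Σ n : ℕ, Fin n → X) → Prop :=
  fun x y => ∃ h : x.1 = y.1, ∀ i : Fin x.1, E (x.2 i) (y.2 (Fin.cast h i))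

/-- `E` has perfectly many classes. -/
def PerfectlyManyClasses {X : Type*} [MeasurableSpace X] (E : X → X → Prop) : Prop :=
  ∃ f : (ℕ → Bool) → X, Measurable f ∧ Function.Injective f ∧
    ∀ a b, a ≠ b → ¬ E (f a) (f b)

namespace ZJumpAux

/-- Classical `decide`. -/
noncomputable def cdec (p : Prop) : Bool := @decide p (Classical.propDecidable p)

lemma cdec_eq_cdec {p q : Prop} : cdec p = cdec q ↔ (p ↔ q) := by
  simp [cdec, decide_eq_decide]

/-- A fixed enumeration of pairs of integers. -/
def encZZ : ℤ × ℤ ≃ ℕ := Denumerable.eqv (ℤ × ℤ)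

/-- A fixed enumeration of `ℤ × ℕ`. -/
def encZN : ℕ ≃ ℤ × ℕ := (Denumerable.eqv (ℤ × ℕ)).symm

variable {X : Type*}

/-- The "pattern" of the bi-infinite sequence `x` anchored at position `k`:
the complete relational type recording which pairs of positions (relative to `k`)
are `E`-equivalent. -/
noncomputable def upat (E : X → X → Prop) (x : ℤ → X) (k : ℤ) : ℕ → Bool :=
  fun m => cdec (E (x (k + (encZZ.symm m).1)) (x (k + (encZZ.symm m).2)))

lemma upat_eq_iff {E : X → X → Prop} {x y : ℤ → X} {k k' : ℤ} :
    upat E x k = upat E y k' ↔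
      ∀ i j : ℤ, (E (x (k + i)) (x (k + j)) ↔ E (y (k' + i)) (y (k' + j))) := by
  constructor
  · intro h i j
    have h2 := congrFun h (encZZ (i, j))
    simpa [upat, cdec_eq_cdec] using h2
  · intro h
    funext m
    exact cdec_eq_cdec.mpr (h _ _)

/-- The basic building block of the reduction: a finite sequence consisting of a
"marker" recording the pattern of `x` at `k` (via the perfect family `f` of pairwise
inequivalent points), followed by the window of `x` of radius `n` centered at `k`. -/
noncomputable def tseq (E : X → X → Prop) (f : (ℕ → Bool) → X) (x : ℤ → X) (k : ℤ) (n : ℕ) :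
    Σ m : ℕ, Fin m → X :=
  ⟨2 * n + 2, fun i => if (i : ℕ) = 0 then f (upat E x k) else x (k - n - 1 + (i : ℕ))⟩

lemma tmatch {E : X → X → Prop} (hE : Equivalence E) {f : (ℕ → Bool) → X}
    (hfE : ∀ a b : ℕ → Bool, E (f a) (f b) → a = b)
    (x y : ℤ → X) (k k' : ℤ) (n n' : ℕ) :
    FinSeqRel E (tseq E f x k n) (tseq E f y k' n') ↔
      (n = n' ∧ upat E x k = upat E y k' ∧
        ∀ m : ℤ, m.natAbs ≤ n → E (x (k + m)) (y (k' + m))) := by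
  constructor
  · rintro ⟨hlen, hco⟩
    have hlen' : 2 * n + 2 = 2 * n' + 2 := hlen
    have hnn : n = n' := by omega
    subst hnn
    refine ⟨rfl, ?_, ?_⟩
    · have h0 := hco ⟨0, show 0 < 2 * n + 2 by omega⟩
      simp only [tseq, Fin.coe_cast] at h0
      exact hfE _ _ (by simpa using h0)
    · intro m hm
      have hco2 := hco ⟨(m + n + 1).toNat, show (m + n + 1).toNat < 2 * n + 2 by omega⟩
      have hne : ((m + n + 1).toNat : ℕ) ≠ 0 := by omega
      simp only [tseq, Fin.coe_cast] at hco2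
      change E (if ((m + n + 1).toNat : ℕ) = 0 then f (upat E x k) else x (k - n - 1 + ((m + n + 1).toNat : ℕ))) (if ((m + n + 1).toNat : ℕ) = 0 then f (upat E y k') else y (k' - n - 1 + ((m + n + 1).toNat : ℕ))) at hco2
      rw [if_neg hne, if_neg hne] at hco2
      have harg : k - n - 1 + (((m + n + 1).toNat : ℕ) : ℤ) = k + m := by omega
      have harg' : k' - n - 1 + (((m + n + 1).toNat : ℕ) : ℤ) = k' + m := by omega
      rw [harg, harg'] at hco2
      exact hco2
  · rintro ⟨rfl, hu, hw⟩
    refine ⟨rfl, fun i => ?_⟩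
    by_cases h0 : (i : ℕ) = 0
    · simp only [tseq, Fin.coe_cast, h0, if_pos]
      change E (f (upat E x k)) (if (i : ℕ) = 0 then f (upat E y k') else y (k' - n - 1 + (i : ℕ)))
      rw [if_pos h0, hu]
      exact hE.refl _
    · have hlt : (i : ℕ) < 2 * n + 2 := i.isLt
      simp only [tseq, Fin.coe_cast]
      change E (if (i : ℕ) = 0 then f (upat E x k) else x (k - n - 1 + (i : ℕ))) (if (i : ℕ) = 0 then f (upat E y k') else y (k' - n - 1 + (i : ℕ)))
      rw [if_neg h0, if_neg h0]
      have hm : (((i : ℕ) : ℤ) - n - 1).natAbs ≤ n := by omega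
      have h2 := hw _ hm
      have harg : k + (((i : ℕ) : ℤ) - n - 1) = k - n - 1 + (i : ℕ) := by ring
      have harg' : k' + (((i : ℕ) : ℤ) - n - 1) = k' - n - 1 + (i : ℕ) := by ring
      rw [harg, harg'] at h2
      exact h2

/-- The key combinatorial lemma: if for every `n` there is a position `d` in `x`
whose full pattern agrees with the pattern of `y` at `0` and whose window of radius
`n` is coordinatewise `E`-equivalent to that of `y` at `0`, then some single shift
of `x` is coordinatewise `E`-equivalent to `y`. -/
lemma keyB {E : X → X → Prop} (hE : Equivalence E) (x y : ℤ → X)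
    (H : ∀ n : ℕ, ∃ d : ℤ,
      (∀ i j : ℤ, (E (x (d + i)) (x (d + j)) ↔ E (y i) (y j))) ∧
      (∀ m : ℤ, m.natAbs ≤ n → E (x (d + m)) (y m))) :
    ∃ d : ℤ, ∀ m : ℤ, E (x (d + m)) (y m) := by
  choose d hA hB using H
  by_cases hc : ∃ d₀ : ℤ, ∀ N : ℕ, ∃ n, N ≤ n ∧ d n = d₀
  · obtain ⟨d₀, h⟩ := hc
    refine ⟨d₀, fun m => ?_⟩
    obtain ⟨n, hn, hdn⟩ := h m.natAbs
    have := hB n m (by omega)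
    rwa [hdn] at this
  · push_neg at hc
    obtain ⟨N₀, hN₀⟩ := hc (d 0)
    have hne : d N₀ ≠ d 0 := hN₀ N₀ le_rfl
    set δ : ℤ := d N₀ - d 0 with hδdef
    have hδ : δ ≠ 0 := sub_ne_zero.mpr hne
    have F : ∀ p q : ℤ, E (x p) (x q) ↔ E (x (p + δ)) (x (q + δ)) := by
      intro p q
      have h1 := hA 0 (p - d 0) (q - d 0)
      have h2 := hA N₀ (p - d 0) (q - d 0)
      have e1 : d 0 + (p - d 0) = p := by ring
      have e2 : d 0 + (q - d 0) = q := by ring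
      have e3 : d N₀ + (p - d 0) = p + δ := by rw [hδdef]; ring
      have e4 : d N₀ + (q - d 0) = q + δ := by rw [hδdef]; ring
      rw [e1, e2] at h1
      rw [e3, e4] at h2
      exact h1.trans h2.symm
    have step : ∀ ε : ℤ, (ε = δ ∨ ε = -δ) → ∀ p q : ℤ,
        E (x p) (y q) → E (x (p + ε)) (y (q + ε)) := by
      intro ε hε p q hpq
      set n : ℕ := q.natAbs + ε.natAbs with hn
      have w1 : E (x (d n + q)) (y q) := hB n q (by omega)
      have w2 : E (x (d n + q + ε)) (y (q + ε)) := by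
        have := hB n (q + ε) (by omega)
        have e : d n + (q + ε) = d n + q + ε := by ring
        rwa [e] at this
      have hxx : E (x p) (x (d n + q)) := hE.trans hpq (hE.symm w1)
      have hFF : E (x (p + ε)) (x (d n + q + ε)) := by
        rcases hε with rfl | rfl
        · exact (F p (d n + q)).mp hxx
        · have e1 : p + -δ + δ = p := by ring
          have e2 : d n + q + -δ + δ = d n + q := by ring
          exact (F (p + -δ) (d n + q + -δ)).mpr (by rw [e1, e2]; exact hxx)
      exact hE.trans hFF w2
    have iter : ∀ ε : ℤ, (ε = δ ∨ ε = -δ) → ∀ (j : ℕ) (p q : ℤ),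
        E (x p) (y q) → E (x (p + j * ε)) (y (q + j * ε)) := by
      intro ε hε j
      induction j with
      | zero => intro p q h; simpa using h
      | succ j ih =>
        intro p q h
        have h2 := step ε hε _ _ (ih p q h)
        have e1 : p + (j : ℤ) * ε + ε = p + ((j : ℕ) + 1 : ℕ) * ε := by push_cast; ring
        have e2 : q + (j : ℤ) * ε + ε = q + ((j : ℕ) + 1 : ℕ) * ε := by push_cast; ring
        rwa [e1, e2] at h2
    set P : ℤ := (δ.natAbs : ℤ) with hPdef
    have hP : 0 < P := by omega
    have hsig : P = δ ∨ P = -δ := by omega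
    have hsig' : -P = δ ∨ -P = -δ := by omega
    set Nn : ℕ := δ.natAbs with hNn
    refine ⟨d Nn, fun m => ?_⟩
    set m₀ : ℤ := m % P with hm0
    have h0le : 0 ≤ m₀ := Int.emod_nonneg m (by omega)
    have hltP : m₀ < P := Int.emod_lt_of_pos m hP
    have base : E (x (d Nn + m₀)) (y m₀) := hB Nn m₀ (by omega)
    have hdiv : m₀ + P * (m / P) = m := Int.emod_add_mul_ediv m P
    set c : ℤ := m / P with hc'
    rcases le_or_gt 0 c with hc0 | hc0
    · have h2 := iter P hsig c.toNat _ _ base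
      have hcc : (c.toNat : ℤ) = c := Int.toNat_of_nonneg hc0
      have hcomm : c * P = P * c := mul_comm _ _
      have e1 : d Nn + m₀ + (c.toNat : ℤ) * P = d Nn + m := by
        rw [hcc]; linarith [hdiv]
      have e2 : m₀ + (c.toNat : ℤ) * P = m := by
        rw [hcc]; linarith [hdiv]
      rwa [e1, e2] at h2
    · have h2 := iter (-P) hsig' (-c).toNat _ _ base
      have hcn : ((-c).toNat : ℤ) = -c := Int.toNat_of_nonneg (by omega)
      have hcomm : (-c) * (-P) = P * c := by ring
      have e1 : d Nn + m₀ + ((-c).toNat : ℤ) * (-P) = d Nn + m := by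
        rw [hcn]; linarith [hdiv]
      have e2 : m₀ + ((-c).toNat : ℤ) * (-P) = m := by
        rw [hcn]; linarith [hdiv]
      rwa [e1, e2] at h2

lemma fsJump_iff {A : Type*} {F : A → A → Prop} (hF : Equivalence F) (a b : ℕ → A) :
    FSJump F a b ↔ (∀ i, ∃ j, F (a i) (b j)) ∧ (∀ j, ∃ i, F (a i) (b j)) := by
  unfold FSJump
  constructor
  · intro h
    refine ⟨fun i => ?_, fun j => ?_⟩
    · have hmem : {z | F (a i) z} ∈ Set.range (fun n => {z | F (b n) z}) := by
        rw [← h]; exact ⟨i, rfl⟩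
      obtain ⟨j, hj⟩ := hmem
      refine ⟨j, ?_⟩
      have hbj : b j ∈ {z | F (b j) z} := hF.refl _
      rw [show {z | F (b j) z} = {z | F (a i) z} from hj] at hbj
      exact hbj
    · have hmem : {z | F (b j) z} ∈ Set.range (fun n => {z | F (a n) z}) := by
        rw [h]; exact ⟨j, rfl⟩
      obtain ⟨i, hi⟩ := hmem
      refine ⟨i, ?_⟩
      have hbj : b j ∈ {z | F (b j) z} := hF.refl _
      rw [← show {z | F (a i) z} = {z | F (b j) z} from hi] at hbj
      exact hbj
  · rintro ⟨h1, h2⟩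
    apply Set.eq_of_subset_of_subset
    · rintro _ ⟨i, rfl⟩
      obtain ⟨j, hj⟩ := h1 i
      refine ⟨j, ?_⟩
      ext z
      exact ⟨fun hz => hF.trans hj hz, fun hz => hF.trans (hF.symm hj) hz⟩
    · rintro _ ⟨j, rfl⟩
      obtain ⟨i, hi⟩ := h2 j
      refine ⟨i, ?_⟩
      ext z
      exact ⟨fun hz => hF.trans (hF.symm hi) hz, fun hz => hF.trans hi hz⟩

lemma finSeqRel_equivalence {E : X → X → Prop} (hE : Equivalence E) :
    Equivalence (FinSeqRel E) := by
  constructor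
  · intro a
    refine ⟨rfl, fun i => ?_⟩
    have h : Fin.cast rfl i = i := by ext; simp
    rw [h]
    exact hE.refl _
  · rintro a b ⟨h, hco⟩
    refine ⟨h.symm, fun i => ?_⟩
    have h2 := hco (Fin.cast h.symm i)
    have h3 : Fin.cast h (Fin.cast h.symm i) = i := by ext; simp
    rw [h3] at h2
    exact hE.symm h2
  · rintro a b c ⟨h, hco⟩ ⟨h', hco'⟩
    refine ⟨h.trans h', fun i => ?_⟩
    have h2 := hco' (Fin.cast h i)
    have h3 : Fin.cast h' (Fin.cast h i) = Fin.cast (h.trans h') i := by ext; simp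
    rw [h3] at h2
    exact hE.trans (hco i) h2

lemma iffE {E : X → X → Prop} (hE : Equivalence E) {a a' b b' : X}
    (h1 : E a a') (h2 : E b b') : (E a b ↔ E a' b') :=
  ⟨fun h => hE.trans (hE.symm h1) (hE.trans h h2),
   fun h => hE.trans h1 (hE.trans h (hE.symm h2))⟩

/-- The reduction of the `ℤ`-jump to `(E^{<ω})⁺`, as a countable sequence of
finite sequences. -/
noncomputable def Sseq (E : X → X → Prop) (f : (ℕ → Bool) → X) (x : ℤ → X) :
    ℕ → Σ m : ℕ, Fin m → X :=
  fun i => tseq E f x (encZN i).1 (encZN i).2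

lemma main_iff {E : X → X → Prop} (hE : Equivalence E) {f : (ℕ → Bool) → X}
    (hfE : ∀ a b : ℕ → Bool, E (f a) (f b) → a = b) (x y : ℤ → X) :
    FSJump (FinSeqRel E) (Sseq E f x) (Sseq E f y) ↔
      ∃ d : ℤ, ∀ m : ℤ, E (x (d + m)) (y m) := by
  rw [fsJump_iff (finSeqRel_equivalence hE)]
  constructor
  · rintro ⟨h1, h2⟩
    apply keyB hE
    intro n
    obtain ⟨i, hi⟩ := h2 (encZN.symm (0, n))
    have hy : Sseq E f y (encZN.symm (0, n)) = tseq E f y 0 n := by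
      simp [Sseq, Equiv.apply_symm_apply]
    rw [hy] at hi
    have hx : Sseq E f x i = tseq E f x (encZN i).1 (encZN i).2 := rfl
    rw [hx] at hi
    obtain ⟨hn, hu, hw⟩ := (tmatch hE hfE x y _ 0 _ n).mp hi
    refine ⟨(encZN i).1, fun a b => ?_, fun m hm => ?_⟩
    · have := upat_eq_iff.mp hu a b
      simpa using this
    · have := hw m (by rw [hn]; exact hm)
      simpa using this
  · rintro ⟨d, hd⟩
    constructor
    · intro i
      refine ⟨encZN.symm ((encZN i).1 - d, (encZN i).2), ?_⟩
      have hy : Sseq E f y (encZN.symm ((encZN i).1 - d, (encZN i).2))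
          = tseq E f y ((encZN i).1 - d) (encZN i).2 := by
        simp [Sseq, Equiv.apply_symm_apply]
      rw [hy]
      have hxy : ∀ a : ℤ, E (x ((encZN i).1 + a)) (y ((encZN i).1 - d + a)) := by
        intro a
        have := hd ((encZN i).1 - d + a)
        have e : d + ((encZN i).1 - d + a) = (encZN i).1 + a := by ring
        rwa [e] at this
      exact (tmatch hE hfE x y _ _ _ _).mpr
        ⟨rfl, upat_eq_iff.mpr (fun a b => iffE hE (hxy a) (hxy b)), fun m _ => hxy m⟩
    · intro j
      refine ⟨encZN.symm ((encZN j).1 + d, (encZN j).2), ?_⟩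
      have hx : Sseq E f x (encZN.symm ((encZN j).1 + d, (encZN j).2))
          = tseq E f x ((encZN j).1 + d) (encZN j).2 := by
        simp [Sseq, Equiv.apply_symm_apply]
      rw [hx]
      have hxy : ∀ a : ℤ, E (x ((encZN j).1 + d + a)) (y ((encZN j).1 + a)) := by
        intro a
        have := hd ((encZN j).1 + a)
        have e : d + ((encZN j).1 + a) = (encZN j).1 + d + a := by ring
        rwa [e] at this
      exact (tmatch hE hfE x y _ _ _ _).mpr
        ⟨rfl, upat_eq_iff.mpr (fun a b => iffE hE (hxy a) (hxy b)), fun m _ => hxy m⟩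

lemma gammaJump_iff (E : X → X → Prop) (x y : Multiplicative ℤ → X) :
    GammaJump (Multiplicative ℤ) E x y ↔
      ∃ d : ℤ, ∀ m : ℤ, E (x (Multiplicative.ofAdd (d + m))) (y (Multiplicative.ofAdd m)) := by
  constructor
  · rintro ⟨γ, hγ⟩
    refine ⟨-Multiplicative.toAdd γ, fun m => ?_⟩
    have h2 := hγ (Multiplicative.ofAdd m)
    have e : Multiplicative.ofAdd (-Multiplicative.toAdd γ + m)
        = γ⁻¹ * Multiplicative.ofAdd m := by
      rw [ofAdd_add, ofAdd_neg, ofAdd_toAdd]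
    rw [e]
    exact h2
  · rintro ⟨d, hd⟩
    refine ⟨Multiplicative.ofAdd (-d), fun α => ?_⟩
    have h2 := hd (Multiplicative.toAdd α)
    have e : (Multiplicative.ofAdd (-d))⁻¹ * α
        = Multiplicative.ofAdd (d + Multiplicative.toAdd α) := by
      rw [ofAdd_add, ofAdd_neg, inv_inv, ofAdd_toAdd]
    rw [e]
    simpa using h2

lemma measurable_sigmaMk' {α : Type*} {β : α → Type*} [m : ∀ a, MeasurableSpace (β a)] (a : α) :
    Measurable (@Sigma.mk α β a) := by
  intro s hs
  exact (iInf_le (fun a => (m a).map (Sigma.mk a)) a) s hs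

lemma measurable_cdecE [MeasurableSpace X] {E : X → X → Prop}
    (hEB : MeasurableSet {p : X × X | E p.1 p.2}) :
    Measurable (fun p : X × X => cdec (E p.1 p.2)) := by
  apply measurable_to_countable'
  intro b
  cases b
  · have h : (fun p : X × X => cdec (E p.1 p.2)) ⁻¹' {false} = {p : X × X | E p.1 p.2}ᶜ := by
      ext p
      simp [cdec]
    rw [h]
    exact hEB.compl
  · have h : (fun p : X × X => cdec (E p.1 p.2)) ⁻¹' {true} = {p : X × X | E p.1 p.2} := by
      ext p
      simp [cdec]
    rw [h]
    exact hEB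

lemma measurable_upat [MeasurableSpace X] {E : X → X → Prop}
    (hEB : MeasurableSet {p : X × X | E p.1 p.2}) (k : ℤ) :
    Measurable (fun x : ℤ → X => upat E x k) := by
  apply measurable_pi_lambda
  intro m
  have hp : Measurable (fun x : ℤ → X =>
      (x (k + (encZZ.symm m).1), x (k + (encZZ.symm m).2))) :=
    Measurable.prodMk (measurable_pi_apply _) (measurable_pi_apply _)
  exact (measurable_cdecE hEB).comp hp

lemma measurable_tseq [MeasurableSpace X] {E : X → X → Prop}
    (hEB : MeasurableSet {p : X × X | E p.1 p.2}) {f : (ℕ → Bool) → X}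
    (hfm : Measurable f) (k : ℤ) (n : ℕ) :
    Measurable (fun x : ℤ → X => tseq E f x k n) := by
  have h : (fun x : ℤ → X => tseq E f x k n)
      = (Sigma.mk (2 * n + 2)) ∘
        (fun x : ℤ → X => fun i : Fin (2 * n + 2) =>
          if (i : ℕ) = 0 then f (upat E x k) else x (k - n - 1 + (i : ℕ))) := rfl
  rw [h]
  apply (measurable_sigmaMk' _).comp
  apply measurable_pi_lambda
  intro i
  by_cases h0 : (i : ℕ) = 0
  · simp only [h0, if_pos]
    exact hfm.comp (measurable_upat hEB k)
  · simp only [h0, if_neg, if_false]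
    exact measurable_pi_apply _

lemma measurable_Sseq [MeasurableSpace X] {E : X → X → Prop}
    (hEB : MeasurableSet {p : X × X | E p.1 p.2}) {f : (ℕ → Bool) → X}
    (hfm : Measurable f) :
    Measurable (fun x : ℤ → X => Sseq E f x) := by
  apply measurable_pi_lambda
  intro i
  exact measurable_tseq hEB hfm _ _

end ZJumpAux

/-- If `E` is a weakly absorbing Borel equivalence relation on a standard
Borel space (perfectly many classes and `(E^{<ω})⁺ ≤_B E⁺`), then `E^{[ℤ]} ≤_B E⁺`. -/
theorem zJump_borelReducible_fsJump_of_weakly_absorbing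
    {X : Type*} [MeasurableSpace X] [StandardBorelSpace X]
    (E : X → X → Prop) (hE : Equivalence E)
    (hEBorel : MeasurableSet {p : X × X | E p.1 p.2})
    (hperf : PerfectlyManyClasses E)
    (habs : BorelReducible (FSJump (FinSeqRel E)) (FSJump E)) :
    BorelReducible (GammaJump (Multiplicative ℤ) E) (FSJump E) := by
  obtain ⟨f, hfm, hfinj, hfne⟩ := hperf
  obtain ⟨h, hhm, hh⟩ := habs
  have hfE : ∀ a b : ℕ → Bool, E (f a) (f b) → a = b := by
    intro a b hab
    by_contra hne
    exact hfne a b hne hab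
  have hr : Measurable (fun x : Multiplicative ℤ → X => (fun k : ℤ => x (Multiplicative.ofAdd k))) :=
    measurable_pi_lambda _ (fun k => measurable_pi_apply _)
  refine ⟨fun x => h (ZJumpAux.Sseq E f (fun k : ℤ => x (Multiplicative.ofAdd k))), ?_, ?_⟩
  · exact hhm.comp ((ZJumpAux.measurable_Sseq hEBorel hfm).comp hr)
  · intro x y
    rw [ZJumpAux.gammaJump_iff E x y, ← hh]
    exact (ZJumpAux.main_iff hE hfE (fun k : ℤ => x (Multiplicative.ofAdd k))
      (fun k : ℤ => y (Multiplicative.ofAdd k))).symm
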